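/- Let X = {x_1, ..., x_m} be a set of nonempty binary strings and construct the directed edge-periodic cycle on vertices v_0, ..., v_m, s with edges (v_{j−1}, v_j) for 1 ≤ j ≤ m, plus (v_m, s) and (s, v_0), where τ((v_m, s)) = 0^m 1 0^(m+1), τ((s, v_0)) = 0^(2m+1) 1, and τ((v_{j−1}, v_j)) = ξ(x_j[0])·...·ξ(x_j[|x_j|−1]) with ξ(c) = c^m 0 1^(m+1). If there exists a position t such that x[t mod |x|] = 1 for all x ∈ X, then the cop starting at v_0 and waiting until time step t·(2m+2), then moving forward each step, catches the robber; hence the cycle is cop-winning. -/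

import Mathlib

set_option maxHeartbeats 2000000


namespace EPD

/-- The directed edge from vertex `e` to vertex `e+1` of the cycle is present at time `t`
iff its string `τ e` has a `1` at position `t mod |τ e|`. -/
def present {n : ℕ} (τ : Fin n → List Bool) (e : Fin n) (t : ℕ) : Prop :=
  (τ e).getD (t % (τ e).length) false = true

/-- A legal move on the directed edge-periodic cycle at time `t`: stay, or cross to the
(forward) neighbour along a directed edge present at time `t`. -/
def moveOK {n : ℕ} (τ : Fin n → List Bool) (t : ℕ) (u v : Fin n) : Prop :=
  v = u ∨ (v.val = (u.val + 1) % n ∧ present τ u t)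

/-- A strategy: given the time and both current positions, produce the mover's next
vertex. -/
abbrev Strat (n : ℕ) := ℕ → Fin n → Fin n → Fin n

def copValid {n : ℕ} (τ : Fin n → List Bool) (σ : Strat n) : Prop :=
  ∀ t u r, moveOK τ t u (σ t u r)

def robValid {n : ℕ} (τ : Fin n → List Bool) (σ : Strat n) : Prop :=
  ∀ t c r, moveOK τ t r (σ t c r)

/-- Positions (cop, robber) at the beginning of round `t`; each round the cop moves
first, then the robber (seeing the cop's new position). -/
def pos {n : ℕ} (σc σr : Strat n) (c0 r0 : Fin n) : ℕ → Fin n × Fin n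
  | 0 => (c0, r0)
  | t + 1 =>
      let p := pos σc σr c0 r0 t
      let c' := σc t p.1 p.2
      (c', σr t c' p.2)

/-- The cop eventually catches the robber: either the robber starts on the cop's vertex,
or some cop move lands on the robber's current vertex. -/
def caught {n : ℕ} (σc σr : Strat n) (c0 r0 : Fin n) : Prop :=
  c0 = r0 ∨ ∃ t,
    σc t (pos σc σr c0 r0 t).1 (pos σc σr c0 r0 t).2 = (pos σc σr c0 r0 t).2

def copWinning {n : ℕ} (τ : Fin n → List Bool) : Prop :=
  ∃ c0 σc, copValid τ σc ∧ ∀ r0 σr, robValid τ σr → caught σc σr c0 r0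

def robberWinning {n : ℕ} (τ : Fin n → List Bool) : Prop :=
  ∀ c0 σc, copValid τ σc → ∃ r0 σr, robValid τ σr ∧ ¬ caught σc σr c0 r0

/-- The gadget block `ξ(c) = c^m 0 1^(m+1)` of length `q = 2m+2`. -/
def xiBlock (m : ℕ) (c : Bool) : List Bool :=
  List.replicate m c ++ [false] ++ List.replicate (m + 1) true

/-- The block encoding `ξ(x[0]) ⋯ ξ(x[|x|-1])` of a binary string `x`. -/
def encode (m : ℕ) (x : List Bool) : List Bool := (x.map (xiBlock m)).flatten

/-- The edge strings of the directed edge-periodic cycle of the reduction, on vertices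
`v_0, ..., v_m, s` (vertex `s` is `⟨m+1⟩`): edge `(v_j, v_{j+1})` (for `j < m`) carries
the block encoding of `x_{j+1}`; edge `(v_m, s)` carries `0^m 1 0^(m+1)`;
edge `(s, v_0)` carries `0^(2m+1) 1`. Edges are indexed by their source vertex. -/
def tauRed (m : ℕ) (x : Fin m → List Bool) : Fin (m + 2) → List Bool := fun e =>
  if h : e.val < m then encode m (x ⟨e.val, h⟩)
  else if e.val = m then
    List.replicate m false ++ [true] ++ List.replicate (m + 1) false
  else List.replicate (2 * m + 1) false ++ [true]

end EPD

namespace EPDProof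
open EPD

lemma getD_rep {a i : ℕ} (c : Bool) (h : i < a) : (List.replicate a c).getD i false = c := by
  rw [List.getD_eq_getElem?_getD, List.getElem?_replicate, if_pos h]; rfl

lemma getD_tripart (a b : ℕ) (c d e : Bool) (i : ℕ) :
    ((List.replicate a c ++ [d]) ++ List.replicate b e).getD i false =
      if i < a then c else if i = a then d else if i < a + 1 + b then e else false := by
  rcases lt_trichotomy i a with h | h | h
  · rw [List.getD_append _ _ _ _ (by simp; omega), List.getD_append _ _ _ _ (by simp; omega),
      getD_rep c h, if_pos h]
  · subst h
    rw [List.getD_append _ _ _ _ (by simp), List.getD_append_right _ _ _ _ (by simp)]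
    simp
  · rw [if_neg (by omega), if_neg (by omega),
      List.getD_append_right _ _ _ _ (by simp; omega)]
    by_cases h2 : i < a + 1 + b
    · rw [if_pos h2, getD_rep e (by simp; omega)]
    · rw [if_neg h2, List.getD_eq_default _ _ (by simp; omega)]

lemma xiBlock_length (m : ℕ) (c : Bool) : (xiBlock m c).length = 2*m+2 := by
  simp [xiBlock]; omega

lemma encode_cons (m : ℕ) (c : Bool) (xs : List Bool) :
    encode m (c :: xs) = xiBlock m c ++ encode m xs := by
  simp [encode]

lemma encode_length (m : ℕ) (xs : List Bool) :
    (encode m xs).length = xs.length * (2*m+2) := by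
  induction xs with
  | nil => simp [encode]
  | cons c tail ih => rw [encode_cons]; simp [ih, xiBlock_length]; ring

lemma encode_getD (m : ℕ) : ∀ (xs : List Bool) (k r : ℕ), k < xs.length → r < 2*m+2 →
    (encode m xs).getD (k*(2*m+2)+r) false = (xiBlock m (xs.getD k false)).getD r false := by
  intro xs
  induction xs with
  | nil => intro k r hk _; simp at hk
  | cons c tail ih =>
    intro k r hk hr
    rw [encode_cons]
    cases k with
    | zero =>
      rw [List.getD_append _ _ _ _ (by rw [xiBlock_length]; omega)]
      simp
    | succ k =>
      have hsm : (k+1)*(2*m+2) = k*(2*m+2) + (2*m+2) := by ring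
      rw [List.getD_append_right _ _ _ _ (by rw [xiBlock_length]; omega)]
      have : (k+1)*(2*m+2)+r - (xiBlock m c).length = k*(2*m+2)+r := by
        rw [xiBlock_length]; omega
      rw [this, ih k r (by simpa using hk) hr]
      rfl

section
variable (m : ℕ) (x : Fin m → List Bool)

lemma tauRed_lt {j : ℕ} (hj : j < m) (h2 : j < m + 2) :
    tauRed m x ⟨j, h2⟩ = encode m (x ⟨j, hj⟩) := by
  simp [tauRed, hj]

lemma tauRed_m (h2 : m < m + 2) :
    tauRed m x ⟨m, h2⟩ = (List.replicate m false ++ [true]) ++ List.replicate (m + 1) false := by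
  simp [tauRed]

lemma tauRed_s (h2 : m + 1 < m + 2) :
    tauRed m x ⟨m+1, h2⟩ = List.replicate (2 * m + 1) false ++ [true] := by
  simp [tauRed]

lemma pres_lt (hne : ∀ j, x j ≠ []) {t j : ℕ} (hj : j < m)
    (ht : (x ⟨j, hj⟩).getD (t % (x ⟨j, hj⟩).length) false = true) (h2 : j < m + 2) :
    present (tauRed m x) ⟨j, h2⟩ (t*(2*m+2)+j) := by
  unfold present
  rw [tauRed_lt m x hj h2]
  set y := x ⟨j, hj⟩ with hy
  have hlen : 0 < y.length := List.length_pos_iff.mpr (hne _)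
  have hmod : (t*(2*m+2)+j) % (encode m y).length = (t % y.length)*(2*m+2) + j := by
    rw [encode_length]
    have h1 : t*(2*m+2)+j = ((t % y.length)*(2*m+2) + j) + (t / y.length) * (y.length * (2*m+2)) := by
      have := Nat.div_add_mod t y.length
      nlinarith [this]
    rw [h1, Nat.add_mul_mod_self_right, Nat.mod_eq_of_lt]
    have hk : t % y.length < y.length := Nat.mod_lt _ hlen
    nlinarith
  rw [hmod, encode_getD m y _ _ (Nat.mod_lt _ hlen) (by omega)]
  show ((List.replicate m _ ++ [false]) ++ List.replicate (m+1) true).getD j false = true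
  rw [getD_tripart, if_pos hj]
  exact ht

lemma pres_m {u : ℕ} (hu : u % (2*m+2) = m) (h2 : m < m + 2) :
    present (tauRed m x) ⟨m, h2⟩ u := by
  unfold present
  rw [tauRed_m m x h2]
  have hl : ((List.replicate m false ++ [true]) ++ List.replicate (m + 1) false).length = 2*m+2 := by
    simp; omega
  rw [hl, hu, getD_tripart, if_neg (by omega), if_pos rfl]

lemma not_pres_m {u : ℕ} (hu : u % (2*m+2) ≠ m) (h2 : m < m + 2) :
    ¬ present (tauRed m x) ⟨m, h2⟩ u := by
  unfold present
  rw [tauRed_m m x h2]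
  have hl : ((List.replicate m false ++ [true]) ++ List.replicate (m + 1) false).length = 2*m+2 := by
    simp; omega
  rw [hl, getD_tripart]
  have : u % (2*m+2) < 2*m+2 := Nat.mod_lt _ (by omega)
  split_ifs with h a <;> simp_all

lemma not_pres_s {u : ℕ} (hu : u % (2*m+2) ≠ 2*m+1) (h2 : m + 1 < m + 2) :
    ¬ present (tauRed m x) ⟨m+1, h2⟩ u := by
  unfold present
  rw [tauRed_s m x h2]
  rw [show List.replicate (2*m+1) false ++ [true]
      = (List.replicate (2*m+1) false ++ [true]) ++ List.replicate 0 false by simp]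
  have hl : ((List.replicate (2*m+1) false ++ [true]) ++ List.replicate 0 false).length = 2*m+2 := by
    simp
  rw [hl, getD_tripart]
  have : u % (2*m+2) < 2*m+2 := Nat.mod_lt _ (by omega)
  split_ifs with h a <;> simp_all

end

/-- The cop's strategy: catch if co-located; otherwise stay at `v₀` until time `T`,
then advance along the cycle one step per round during rounds `T, …, T+m`. -/
def copStrat (m T : ℕ) : Strat (m+2) := fun u c r =>
  if r = c then c
  else if T ≤ u ∧ u ≤ T + m ∧ c.val = u - T then
    ⟨(c.val+1) % (m+2), Nat.mod_lt _ (by omega)⟩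
  else c

lemma copStrat_catch (m T u : ℕ) (c r : Fin (m+2)) (h : r = c) : copStrat m T u c r = c := by
  simp [copStrat, h]

lemma copStrat_adv (m T u : ℕ) (c r : Fin (m+2)) (h : r ≠ c)
    (h2 : T ≤ u ∧ u ≤ T + m ∧ c.val = u - T) :
    copStrat m T u c r = ⟨(c.val+1) % (m+2), Nat.mod_lt _ (by omega)⟩ := by
  rw [copStrat, if_neg h, if_pos h2]

lemma copStrat_stay (m T u : ℕ) (c r : Fin (m+2)) (h : r ≠ c)
    (h2 : ¬ (T ≤ u ∧ u ≤ T + m ∧ c.val = u - T)) :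
    copStrat m T u c r = c := by
  rw [copStrat, if_neg h, if_neg h2]

end EPDProof

open EPD EPDProof in
/-- Forward direction of the reduction: if some position `t` has `x[t mod |x|] = 1` for
all `x ∈ X`, then in the directed edge-periodic cycle of the reduction the cop starting
at `v_0` has a winning strategy; hence the cycle is cop-winning. -/
theorem stmt_12 (m : ℕ) (hm : 1 ≤ m) (x : Fin m → List Bool)
    (hne : ∀ j, x j ≠ [])
    (hyes : ∃ t : ℕ, ∀ j, (x j).getD (t % (x j).length) false = true) :
    (∃ σc, copValid (tauRed m x) σc ∧
      ∀ r0 σr, robValid (tauRed m x) σr → caught σc σr (⟨0, by omega⟩ : Fin (m + 2)) r0) ∧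
    copWinning (tauRed m x) := by
  obtain ⟨t, ht⟩ := hyes
  set T := t*(2*m+2) with hTdef
  have key : ∃ σc, copValid (tauRed m x) σc ∧ ∀ r0 σr, robValid (tauRed m x) σr →
      caught σc σr (⟨0, by omega⟩ : Fin (m+2)) r0 := by
    refine ⟨copStrat m T, ?_, ?_⟩
    · -- validity of the cop's strategy
      intro u c r
      by_cases h1 : r = c
      · rw [copStrat_catch m T u c r h1]; exact Or.inl rfl
      by_cases h2 : T ≤ u ∧ u ≤ T + m ∧ c.val = u - T
      · rw [copStrat_adv m T u c r h1 h2]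
        refine Or.inr ⟨rfl, ?_⟩
        obtain ⟨ha, hb, hcv⟩ := h2
        have hu : u = T + c.val := by omega
        have hcm : c.val ≤ m := by omega
        rcases Nat.lt_or_ge c.val m with hlt | hge
        · have := pres_lt m x hne hlt (ht ⟨c.val, hlt⟩) c.isLt
          have hc : (⟨c.val, c.isLt⟩ : Fin (m+2)) = c := rfl
          rw [hc] at this
          rwa [hu, hTdef]
        · have hcm' : c.val = m := by omega
          have hmod : u % (2*m+2) = m := by
            rw [hu, hcm', hTdef, mul_comm t (2*m+2), Nat.mul_add_mod,
              Nat.mod_eq_of_lt (by omega)]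
          have := pres_m m x hmod (by omega)
          have hc : (⟨m, by omega⟩ : Fin (m+2)) = c := by
            exact Fin.eq_of_val_eq (by simp [hcm'])
          rwa [hc] at this
      · rw [copStrat_stay m T u c r h1 h2]; exact Or.inl rfl
    · -- every robber is caught
      intro r0 σr hrv
      by_contra hnc
      rw [caught] at hnc
      push_neg at hnc
      obtain ⟨h0, hall⟩ := hnc
      set v0 : Fin (m+2) := ⟨0, by omega⟩ with hv0
      set P : ℕ → Fin (m+2) × Fin (m+2) := pos (copStrat m T) σr v0 r0 with hP
      have hPc : ∀ u, (P (u+1)).1 = copStrat m T u (P u).1 (P u).2 := fun u => rfl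
      have hPr : ∀ u, (P (u+1)).2 = σr u (copStrat m T u (P u).1 (P u).2) (P u).2 :=
        fun u => rfl
      have hnever : ∀ u, copStrat m T u (P u).1 (P u).2 ≠ (P u).2 := hall
      have hne2 : ∀ u, (P u).1 ≠ (P u).2 := by
        intro u h
        apply hnever u
        rw [copStrat_catch m T u _ _ h.symm, h]
      -- cop waits at v0
      have hc0 : ∀ u, u ≤ T → (P u).1 = v0 := by
        intro u
        induction u with
        | zero => intro _; rfl
        | succ u ih =>
          intro hu
          rw [hPc u, copStrat_stay m T u _ _ (Ne.symm (hne2 u)) (by omega), ih (by omega)]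
      -- cop sweeps
      have hcj : ∀ j (hjm : j ≤ m+1), (P (T+j)).1 = ⟨j, by omega⟩ := by
        intro j
        induction j with
        | zero => intro _; exact hc0 T le_rfl
        | succ j ih =>
          intro hj
          have hij := ih (by omega)
          have hthis : (P (T+j+1)).1 = copStrat m T (T+j) (P (T+j)).1 (P (T+j)).2 := hPc (T+j)
          have hcond : T ≤ T+j ∧ T+j ≤ T+m ∧ ((P (T+j)).1).val = (T+j) - T := by
            refine ⟨by omega, by omega, ?_⟩
            rw [hij]
            show j = T + j - T
            omega
          rw [show T+(j+1) = T+j+1 from rfl, hthis,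
            copStrat_adv m T (T+j) _ _ (Ne.symm (hne2 (T+j))) hcond]
          apply Fin.eq_of_val_eq
          show ((P (T+j)).1.val + 1) % (m+2) = j+1
          rw [hij]
          show (j+1) % (m+2) = j+1
          exact Nat.mod_eq_of_lt (by omega)
      -- robber's moves are legal
      have hrmov : ∀ u, moveOK (tauRed m x) u (P u).2 (P (u+1)).2 := fun u => hrv u _ _
      -- mod facts
      have hmodT : ∀ j, j < 2*m+2 → (T+j) % (2*m+2) = j := by
        intro j hj
        rw [hTdef, mul_comm t (2*m+2), Nat.mul_add_mod, Nat.mod_eq_of_lt hj]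
      -- robber stuck at s
      have hstuck_s : ∀ u, u % (2*m+2) ≠ 2*m+1 → (P u).2 = ⟨m+1, by omega⟩ →
          (P (u+1)).2 = ⟨m+1, by omega⟩ := by
        intro u hu hs
        rcases hrmov u with h | ⟨_, hp⟩
        · rw [h, hs]
        · rw [hs] at hp
          exact absurd hp (not_pres_s m x hu (by omega))
      -- robber can't enter s off-schedule
      have hstuck_m : ∀ u, u % (2*m+2) ≠ m → (P u).2 = ⟨m, by omega⟩ →
          (P (u+1)).2 = ⟨m, by omega⟩ := by
        intro u hu hs
        rcases hrmov u with h | ⟨_, hp⟩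
        · rw [h, hs]
        · rw [hs] at hp
          exact absurd hp (not_pres_m m x hu (by omega))
      -- case analysis on robber's position at time T
      rcases Nat.lt_or_ge ((P T).2).val 1 with hg0 | hg1
      · -- robber at v0 at time T: contradicts hne2
        apply hne2 T
        rw [hc0 T le_rfl, hv0]
        exact (Fin.eq_of_val_eq (by show ((P T).2).val = 0; omega)).symm
      rcases Nat.lt_or_ge ((P T).2).val (m+1) with hgm | hgs
      · -- robber at v_g, 1 ≤ g ≤ m
        have inv : ∀ j, j ≤ m → j < (P (T+j)).2.val ∧ (P (T+j)).2.val ≤ m := by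
          intro j
          induction j with
          | zero =>
            intro _
            show 0 < ((P T).2).val ∧ ((P T).2).val ≤ m
            omega
          | succ j ih =>
            intro hj
            obtain ⟨h1, h2⟩ := ih (by omega)
            have hneq : (P (T+j)).2.val ≠ j+1 := by
              intro he
              apply hnever (T+j)
              calc copStrat m T (T+j) (P (T+j)).1 (P (T+j)).2
                  = (P (T+j+1)).1 := (hPc (T+j)).symm
                _ = ⟨j+1, by omega⟩ := hcj (j+1) (by omega)
                _ = (P (T+j)).2 := Fin.eq_of_val_eq (by simp [he])
            have h1' : j + 2 ≤ (P (T+j)).2.val := by omega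
            by_cases hm2 : (P (T+j)).2.val = m
            · have hPm : (P (T+j)).2 = ⟨m, by omega⟩ := Fin.eq_of_val_eq (by simpa)
              have hst := hstuck_m (T+j) (by rw [hmodT j (by omega)]; omega) hPm
              rw [show T+(j+1) = T+j+1 from rfl, hst]
              exact ⟨by omega, by omega⟩
            · rcases hrmov (T+j) with hstay | ⟨hval, _⟩
              · rw [show T+(j+1) = T+j+1 from rfl, hstay]
                exact ⟨by omega, h2⟩
              · rw [show T+(j+1) = T+j+1 from rfl, hval,
                  Nat.mod_eq_of_lt (by omega)]
                exact ⟨by omega, by omega⟩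
        have := inv m le_rfl
        omega
      · -- robber at s at time T
        have hgs' : (P T).2 = ⟨m+1, by omega⟩ :=
          Fin.eq_of_val_eq (by have := ((P T).2).isLt; simp; omega)
        have hss : ∀ j (hjm : j ≤ m+1), (P (T+j)).2 = ⟨m+1, by omega⟩ := by
          intro j
          induction j with
          | zero => intro _; exact hgs'
          | succ j ih =>
            intro hj
            have e1 := hmodT j (by omega)
            have e2 : (T+j) % (2*m+2) ≠ 2*m+1 := by rw [e1]; omega
            have e3 := ih (by omega)
            have e4 := hstuck_s (T+j) e2 e3
            rw [show T+(j+1) = T+j+1 from rfl, e4]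
        apply hne2 (T+(m+1))
        rw [hcj (m+1) le_rfl, hss (m+1) le_rfl]
  obtain ⟨σc, h1, h2⟩ := key
  exact ⟨⟨σc, h1, h2⟩, ⟨⟨0, by omega⟩, σc, h1, h2⟩⟩
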